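/- For all s > 0 and r ≥ 1: q_r(s) e^{-s} ≥ exp(-s^r/r!), where q_r(s) = sum_{i=0}^{r-1} s^i/i!, i.e. -log(q_r(s)e^{-s}) ≤ s^r/r!. -/

import Mathlib

open Finset

/-- `q_r(s) = ∑_{i=0}^{r-1} s^i/i!`, the truncated exponential series. -/
noncomputable def qrR (r : ℕ) (s : ℝ) : ℝ :=
  ∑ i ∈ Finset.range r, s ^ i / (Nat.factorial i : ℝ)

lemma qrR_hasDerivAt (m : ℕ) (s : ℝ) : HasDerivAt (qrR (m + 1)) (qrR m s) s := by
  induction m with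
  | zero =>
    have : qrR 1 = fun _ : ℝ => (1 : ℝ) := by
      funext t; simp [qrR]
    rw [this]
    simpa [qrR] using hasDerivAt_const s (1 : ℝ)
  | succ n ih =>
    have h1 : qrR (n + 2) = fun t : ℝ =>
        qrR (n + 1) t + t ^ (n + 1) / (Nat.factorial (n + 1) : ℝ) := by
      funext t; simp [qrR, Finset.sum_range_succ]
    rw [h1]
    have h2 : HasDerivAt (fun t : ℝ => t ^ (n + 1) / (Nat.factorial (n + 1) : ℝ))
        (s ^ n / (Nat.factorial n : ℝ)) s := by
      have := (hasDerivAt_pow (n + 1) s).div_const (Nat.factorial (n + 1) : ℝ)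
      refine this.congr_deriv ?_
      have hfac : (Nat.factorial (n + 1) : ℝ) = (n + 1) * Nat.factorial n := by
        push_cast [Nat.factorial_succ]; ring
      rw [hfac, Nat.add_sub_cancel]; push_cast
      have hn : (0:ℝ) < Nat.factorial n := by positivity
      field_simp
    have := ih.add h2
    have h3 : qrR (n + 1) s = qrR n s + s ^ n / (Nat.factorial n : ℝ) := by
      simp [qrR, Finset.sum_range_succ]
    rw [h3]
    exact this

lemma one_le_qrR (m : ℕ) (s : ℝ) (hs : 0 ≤ s) : 1 ≤ qrR (m + 1) s := by
  have h0 : (0:ℕ) ∈ Finset.range (m + 1) := by simp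
  have := Finset.single_le_sum (f := fun i => s ^ i / (Nat.factorial i : ℝ))
    (fun i _ => by positivity) h0
  simpa [qrR] using this

/-- For `s > 0` and `r ≥ 1`: `q_r(s) e^{-s} ≥ exp(-s^r/r!)`, i.e.
`-log(q_r(s) e^{-s}) ≤ s^r/r!`. -/
theorem qr_exp_lower_bound (r : ℕ) (hr : 1 ≤ r) (s : ℝ) (hs : 0 < s) :
    Real.exp (-(s ^ r / (Nat.factorial r : ℝ))) ≤ qrR r s * Real.exp (-s)
    ∧ -Real.log (qrR r s * Real.exp (-s)) ≤ s ^ r / (Nat.factorial r : ℝ) := by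
  obtain ⟨m, rfl⟩ : ∃ m, r = m + 1 := ⟨r - 1, (Nat.succ_pred_eq_of_pos hr).symm⟩
  set F : ℝ → ℝ := fun t =>
    qrR (m + 1) t * Real.exp (t ^ (m + 1) / (Nat.factorial (m + 1) : ℝ) - t) with hF
  have hderiv : ∀ t : ℝ, HasDerivAt F
      (Real.exp (t ^ (m + 1) / (Nat.factorial (m + 1) : ℝ) - t) *
        (t ^ m / (Nat.factorial m : ℝ) * (qrR (m + 1) t - 1))) t := by
    intro t
    have h2 : HasDerivAt (fun u : ℝ => u ^ (m + 1) / (Nat.factorial (m + 1) : ℝ) - u)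
        (t ^ m / (Nat.factorial m : ℝ) - 1) t := by
      have hp : HasDerivAt (fun u : ℝ => u ^ (m + 1) / (Nat.factorial (m + 1) : ℝ))
          (t ^ m / (Nat.factorial m : ℝ)) t := by
        have := (hasDerivAt_pow (m + 1) t).div_const (Nat.factorial (m + 1) : ℝ)
        refine this.congr_deriv ?_
        have hfac : (Nat.factorial (m + 1) : ℝ) = (m + 1) * Nat.factorial m := by
          push_cast [Nat.factorial_succ]; ring
        rw [hfac, Nat.add_sub_cancel]; push_cast
        have hn : (0:ℝ) < Nat.factorial m := by positivity
        field_simp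
      exact hp.sub (hasDerivAt_id t)
    have := (qrR_hasDerivAt m t).mul h2.exp
    refine this.congr_deriv ?_
    have h3 : qrR (m + 1) t = qrR m t + t ^ m / (Nat.factorial m : ℝ) := by
      simp [qrR, Finset.sum_range_succ]
    rw [h3]
    ring
  have hmono : MonotoneOn F (Set.Ici (0:ℝ)) := by
    apply monotoneOn_of_deriv_nonneg (convex_Ici 0)
    · exact (fun t _ => (hderiv t).differentiableAt.continuousAt.continuousWithinAt)
    · exact fun t _ => (hderiv t).differentiableAt.differentiableWithinAt
    · intro t ht
      rw [interior_Ici] at ht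
      rw [(hderiv t).deriv]
      have ht' : (0:ℝ) < t := ht
      have h1 : (0:ℝ) ≤ qrR (m + 1) t - 1 := by
        linarith [one_le_qrR m t ht'.le]
      have h2 : (0:ℝ) ≤ t ^ m / (Nat.factorial m : ℝ) := by positivity
      exact mul_nonneg (Real.exp_pos _).le (mul_nonneg h2 h1)
  have hF0 : F 0 = 1 := by
    simp [hF, qrR, Finset.sum_range_succ', zero_pow]
  have hFs : 1 ≤ F s := by
    rw [← hF0]
    exact hmono (Set.self_mem_Ici) (Set.mem_Ici.mpr hs.le) hs.le
  set x := s ^ (m + 1) / (Nat.factorial (m + 1) : ℝ) with hx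
  have hmain : Real.exp (-x) ≤ qrR (m + 1) s * Real.exp (-s) := by
    have := mul_le_mul_of_nonneg_right hFs (Real.exp_pos (-x)).le
    calc Real.exp (-x) = 1 * Real.exp (-x) := by ring
    _ ≤ F s * Real.exp (-x) := this
    _ = qrR (m + 1) s * (Real.exp (x - s) * Real.exp (-x)) := by simp [hF]; ring
    _ = qrR (m + 1) s * Real.exp (-s) := by rw [← Real.exp_add]; ring_nf
  refine ⟨hmain, ?_⟩
  have hlog : -x ≤ Real.log (qrR (m + 1) s * Real.exp (-s)) := by
    calc -x = Real.log (Real.exp (-x)) := (Real.log_exp _).symm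
    _ ≤ Real.log (qrR (m + 1) s * Real.exp (-s)) :=
        Real.log_le_log (Real.exp_pos _) hmain
  linarith
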